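/- Let Ω ⊆ ℝ^d be open and bounded, and let y, yₙ : Ω̄ → ℝ^d be continuous maps such that yₙ → y uniformly on Ω̄ and each restriction yₙ|_Ω : Ω → yₙ(Ω) and y|_Ω : Ω → y(Ω) is a homeomorphism onto its (open) image. Then d_H(closure(yₙ(Ω)), closure(y(Ω))) → 0 and d_H(∂ yₙ(Ω), ∂ y(Ω)) → 0 as n → ∞. -/

import Mathlib

open Metric Set Filter Topology

variable {d : ℕ}

/-- `y` restricted to the open set `Ω` is a homeomorphism onto its (open) image:
it is injective on `Ω`, continuous there, and maps open subsets of `Ω` to open sets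
(in particular `y(Ω)` is open and the inverse is continuous). -/
def IsHomeoOntoImage (y : EuclideanSpace ℝ (Fin d) → EuclideanSpace ℝ (Fin d))
    (Ω : Set (EuclideanSpace ℝ (Fin d))) : Prop :=
  Set.InjOn y Ω ∧ ContinuousOn y Ω ∧
    ∀ U ⊆ Ω, IsOpen U → IsOpen (y '' U)

/-- For a bounded set and a map continuous on its closure, the image of the closure is
the closure of the image. -/
lemma image_closure_eq_closure_image
    {f : EuclideanSpace ℝ (Fin d) → EuclideanSpace ℝ (Fin d)}
    {Ω : Set (EuclideanSpace ℝ (Fin d))} (hΩb : Bornology.IsBounded Ω)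
    (hf : ContinuousOn f (closure Ω)) :
    f '' closure Ω = closure (f '' Ω) := by
  apply Subset.antisymm hf.image_closure
  have hK : IsCompact (closure Ω) := hΩb.isCompact_closure
  exact closure_minimal (image_mono subset_closure)
    (hK.image_of_continuousOn hf).isClosed

/-- The key topological lemma: a boundary point cannot be mapped into the (open) image
of the open set, because the inverse is continuous. -/
lemma frontier_image_eq
    {f : EuclideanSpace ℝ (Fin d) → EuclideanSpace ℝ (Fin d)}
    {Ω : Set (EuclideanSpace ℝ (Fin d))} (hΩo : IsOpen Ω)
    (hΩb : Bornology.IsBounded Ω) (hf : ContinuousOn f (closure Ω))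
    (hinj : Set.InjOn f Ω)
    (hopen : ∀ U ⊆ Ω, IsOpen U → IsOpen (f '' U)) :
    frontier (f '' Ω) = f '' frontier Ω := by
  have himg : IsOpen (f '' Ω) := hopen Ω Subset.rfl hΩo
  have hclo : closure (f '' Ω) = f '' closure Ω :=
    (image_closure_eq_closure_image hΩb hf).symm
  rw [himg.frontier_eq, hclo]
  ext x
  constructor
  · rintro ⟨⟨p, hp, rfl⟩, hnot⟩
    rcases (closure_eq_self_union_frontier Ω ▸ hp) with hp | hp
    · exact absurd (mem_image_of_mem f hp) hnot
    · exact mem_image_of_mem f hp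
  · rintro ⟨p, hp, rfl⟩
    refine ⟨mem_image_of_mem f (frontier_subset_closure hp), ?_⟩
    rintro ⟨a, ha, hfa⟩
    -- `p` is a boundary point with `f p = f a`, `a ∈ Ω`: contradiction.
    have hpΩ : p ∉ Ω := by
      rw [hΩo.frontier_eq] at hp
      exact hp.2
    have hpa : p ≠ a := fun h => hpΩ (h ▸ ha)
    have hr : (0 : ℝ) < dist p a := dist_pos.2 hpa
    set W : Set (EuclideanSpace ℝ (Fin d)) := ball a (dist p a / 2) ∩ Ω with hW
    have hWopen : IsOpen W := isOpen_ball.inter hΩo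
    have hWsub : W ⊆ Ω := inter_subset_right
    have haW : a ∈ W := ⟨mem_ball_self (by linarith), ha⟩
    have hfW : IsOpen (f '' W) := hopen W hWsub hWopen
    have hfaW : f a ∈ f '' W := mem_image_of_mem f haW
    -- approach `p` from within `Ω`
    have hnb : (𝓝[Ω] p).NeBot :=
      mem_closure_iff_nhdsWithin_neBot.1 (frontier_subset_closure hp)
    have hcont : Tendsto f (𝓝[Ω] p) (𝓝 (f p)) := by
      have := (hf p (frontier_subset_closure hp)).tendsto
      exact this.mono_left (nhdsWithin_mono p subset_closure)
    have h1 : ∀ᶠ z in 𝓝[Ω] p, f z ∈ f '' W := by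
      apply hcont
      rw [← hfa]
      exact hfW.mem_nhds hfaW
    have h2 : ∀ᶠ z in 𝓝[Ω] p, z ∈ ball p (dist p a / 2) := by
      have hb : ball p (dist p a / 2) ∈ 𝓝[Ω] p :=
        nhdsWithin_le_nhds (isOpen_ball.mem_nhds (mem_ball_self (by linarith)))
      exact eventually_iff.mpr hb
    have h3 : ∀ᶠ z in 𝓝[Ω] p, z ∈ Ω := eventually_mem_nhdsWithin
    rcases (h1.and (h2.and h3)).exists with ⟨z, hz1, hz2, hz3⟩
    rcases hz1 with ⟨w, hwW, hwz⟩
    have hzw : z = w := hinj hz3 (hWsub hwW) hwz.symm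
    have hzb : z ∈ ball a (dist p a / 2) := hzw ▸ hwW.1
    have : dist p a < dist p a := by
      calc dist p a ≤ dist p z + dist z a := dist_triangle p z a
        _ < dist p a / 2 + dist p a / 2 := by
            have := mem_ball.1 hz2
            have := mem_ball.1 hzb
            rw [dist_comm p z] at *
            linarith [mem_ball.1 hz2, mem_ball.1 hzb]
        _ = dist p a := by ring
    exact lt_irrefl _ this

/-- Hausdorff convergence of intermediate configurations: if `yₙ → y` uniformly on `Ω̄`
and all restrictions to `Ω` are homeomorphisms onto their images, then the closures of
the images and the boundaries of the images converge in Hausdorff distance. -/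
theorem hausdorff_convergence_of_images (Ω : Set (EuclideanSpace ℝ (Fin d)))
    (hΩo : IsOpen Ω) (hΩb : Bornology.IsBounded Ω) (hΩne : Ω.Nonempty)
    (y : EuclideanSpace ℝ (Fin d) → EuclideanSpace ℝ (Fin d))
    (yn : ℕ → EuclideanSpace ℝ (Fin d) → EuclideanSpace ℝ (Fin d))
    (hy : ContinuousOn y (closure Ω)) (hyn : ∀ n, ContinuousOn (yn n) (closure Ω))
    (hunif : TendstoUniformlyOn yn y atTop (closure Ω))
    (hhomeo : IsHomeoOntoImage y Ω) (hhomeon : ∀ n, IsHomeoOntoImage (yn n) Ω) :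
    Tendsto (fun n => Metric.hausdorffDist (closure (yn n '' Ω)) (closure (y '' Ω)))
        atTop (𝓝 0) ∧
    Tendsto (fun n => Metric.hausdorffDist (frontier (yn n '' Ω)) (frontier (y '' Ω)))
        atTop (𝓝 0) := by
  have hKey : ∀ K : Set (EuclideanSpace ℝ (Fin d)), K ⊆ closure Ω →
      Tendsto (fun n => Metric.hausdorffDist (yn n '' K) (y '' K)) atTop (𝓝 0) := by
    intro K hK
    rw [Metric.tendsto_nhds]
    intro ε hε
    have := (Metric.tendstoUniformlyOn_iff.1 hunif) (ε / 2) (by positivity)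
    filter_upwards [this] with n hn
    have hle : Metric.hausdorffDist (yn n '' K) (y '' K) ≤ ε / 2 := by
      apply Metric.hausdorffDist_le_of_mem_dist (by positivity)
      · rintro x ⟨k, hk, rfl⟩
        exact ⟨y k, mem_image_of_mem y hk,
          by rw [dist_comm]; exact (hn k (hK hk)).le⟩
      · rintro x ⟨k, hk, rfl⟩
        exact ⟨yn n k, mem_image_of_mem (yn n) hk, (hn k (hK hk)).le⟩
    rw [Real.dist_eq, sub_zero, abs_of_nonneg Metric.hausdorffDist_nonneg]
    linarith
  constructor
  · have h1 := hKey (closure Ω) Subset.rfl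
    have e1 : ∀ n, yn n '' closure Ω = closure (yn n '' Ω) := fun n =>
      image_closure_eq_closure_image hΩb (hyn n)
    have e2 : y '' closure Ω = closure (y '' Ω) :=
      image_closure_eq_closure_image hΩb hy
    simpa only [e1, e2] using h1
  · have h1 := hKey (frontier Ω) frontier_subset_closure
    have e1 : ∀ n, yn n '' frontier Ω = frontier (yn n '' Ω) := fun n =>
      (frontier_image_eq hΩo hΩb (hyn n) (hhomeon n).1 (hhomeon n).2.2).symm
    have e2 : y '' frontier Ω = frontier (y '' Ω) :=
      (frontier_image_eq hΩo hΩb hy hhomeo.1 hhomeo.2.2).symm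
    simpa only [e1, e2] using h1
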